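/- Fix (x, v) ∈ ℝᵈ × ℝᵈ, let b ∈ ℝᵈ, set b̃ = (b, 0) ∈ ℝ²ᵈ and F(x, v) = A_x(x − b) + A_v v + N(x, v). Define f̃_{h/2}(x, v) = (x, φ(h/2, v)) ∈ ℝ²ᵈ and μ̃_h(y) = exp(Ã h)(y − b̃) + b̃ for y ∈ ℝ²ᵈ. Write μ̃_h(f̃_{h/2}(x, v)) = (μ_h^S, μ_h^R) with μ_h^S, μ_h^R ∈ ℝᵈ. Then as h → 0⁺: μ_h^S = x + h·v + (h²/2)·F(x, v) + O(h³), and μ_h^R = v + h·(F(x, v) − (1/2)·N(x, v)) + O(h²). -/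

import Mathlib

open Matrix
lemma norm_inl_le {d : ℕ} (z : Fin d ⊕ Fin d → ℝ) :
    ‖(fun i => z (Sum.inl i))‖ ≤ ‖z‖ := by
  refine (pi_norm_le_iff_of_nonneg (norm_nonneg z)).2 fun i => ?_
  exact norm_le_pi_norm z (Sum.inl i)

lemma norm_inr_le {d : ℕ} (z : Fin d ⊕ Fin d → ℝ) :
    ‖(fun i => z (Sum.inr i))‖ ≤ ‖z‖ := by
  refine (pi_norm_le_iff_of_nonneg (norm_nonneg z)).2 fun i => ?_
  exact norm_le_pi_norm z (Sum.inr i)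

lemma norm_sum_elim_le {d : ℕ} (a c : Fin d → ℝ) :
    ‖Sum.elim a c‖ ≤ ‖a‖ + ‖c‖ := by
  refine (pi_norm_le_iff_of_nonneg (by positivity)).2 fun i => ?_
  cases i with
  | inl j =>
    have h1 := norm_le_pi_norm a j
    have h2 := norm_nonneg c
    rw [Real.norm_eq_abs] at h1
    simpa using by linarith
  | inr j =>
    have h1 := norm_le_pi_norm c j
    have h2 := norm_nonneg a
    rw [Real.norm_eq_abs] at h1
    simpa using by linarith

lemma exists_mulVec_bound {m n : Type*} [Fintype m] [Fintype n] (M : Matrix m n ℝ) :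
    ∃ K ≥ (0:ℝ), ∀ y : n → ℝ, ‖M *ᵥ y‖ ≤ K * ‖y‖ := by
  letI := Matrix.linftyOpNormedAddCommGroup (m := m) (n := n) (α := ℝ)
  exact ⟨‖M‖, norm_nonneg M, fun y => Matrix.linfty_opNorm_mulVec M y⟩

set_option maxHeartbeats 2000000 in
lemma exp_taylor_mulVec {n : Type*} [Fintype n] [DecidableEq n] (A : Matrix n n ℝ) :
    ∃ C > (0:ℝ), ∀ h : ℝ, 0 ≤ h → h ≤ 1 → ∀ y : n → ℝ,
      ‖(NormedSpace.exp (h • A) - ((1 : Matrix n n ℝ) + h • A + (h ^ 2 / 2) • A ^ 2)) *ᵥ y‖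
        ≤ C * h ^ 3 * ‖y‖ := by
  letI : SeminormedRing (Matrix n n ℝ) := Matrix.linftyOpSemiNormedRing
  letI : NormedRing (Matrix n n ℝ) := Matrix.linftyOpNormedRing
  letI : NormedAlgebra ℝ (Matrix n n ℝ) := Matrix.linftyOpNormedAlgebra
  set S : ℝ := ∑' k : ℕ, ‖A‖ ^ k / (Nat.factorial k) with hS
  have hSnn : 0 ≤ S := tsum_nonneg fun k => by positivity
  refine ⟨S + 1, by linarith, fun h h0 h1 y => ?_⟩
  have key : ‖NormedSpace.exp (h • A)
      - ((1 : Matrix n n ℝ) + h • A + (h ^ 2 / 2) • A ^ 2)‖ ≤ S * h ^ 3 := by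
    have hsum : Summable (fun k : ℕ => ((Nat.factorial k : ℝ))⁻¹ • (h • A) ^ k) :=
      NormedSpace.expSeries_summable' (𝕂 := ℝ) (h • A)
    have hnormsum : Summable (fun k : ℕ => ‖((Nat.factorial k : ℝ))⁻¹ • (h • A) ^ k‖) :=
      NormedSpace.norm_expSeries_summable' (𝕂 := ℝ) (h • A)
    have hpartial : ∑ i ∈ Finset.range 3, ((Nat.factorial i : ℝ))⁻¹ • (h • A) ^ i
        = (1 : Matrix n n ℝ) + h • A + (h ^ 2 / 2) • A ^ 2 := by
      simp only [Finset.sum_range_succ, Finset.sum_range_zero, zero_add, Nat.factorial,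
        smul_pow]
      norm_num
      module
    have hsplit : ((1 : Matrix n n ℝ) + h • A + (h ^ 2 / 2) • A ^ 2)
        + ∑' k : ℕ, ((Nat.factorial (k + 3) : ℝ))⁻¹ • (h • A) ^ (k + 3)
        = ∑' k : ℕ, ((Nat.factorial k : ℝ))⁻¹ • (h • A) ^ k := by
      rw [← hpartial]
      exact Summable.sum_add_tsum_nat_add 3 hsum
    have hrem : NormedSpace.exp (h • A)
        - ((1 : Matrix n n ℝ) + h • A + (h ^ 2 / 2) • A ^ 2)
        = ∑' k : ℕ, ((Nat.factorial (k + 3) : ℝ))⁻¹ • (h • A) ^ (k + 3) := by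
      rw [NormedSpace.exp_eq_tsum ℝ]
      beta_reduce
      rw [← hsplit]
      abel
    rw [hrem]
    have hterm : ∀ k : ℕ, ‖((Nat.factorial (k + 3) : ℝ))⁻¹ • (h • A) ^ (k + 3)‖
        ≤ ‖A‖ ^ (k + 3) / (Nat.factorial (k + 3)) * h ^ 3 := by
      intro k
      have h6 : (0:ℝ) < (Nat.factorial (k + 3) : ℝ) := by positivity
      have h4 : ‖h • A‖ = h * ‖A‖ := by
        rw [norm_smul, Real.norm_eq_abs, abs_of_nonneg h0]
      have h3 : ‖((Nat.factorial (k + 3) : ℝ))⁻¹ • (h • A) ^ (k + 3)‖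
          ≤ ((Nat.factorial (k + 3) : ℝ))⁻¹ * (h * ‖A‖) ^ (k + 3) := by
        rw [norm_smul, Real.norm_eq_abs, abs_of_nonneg (by positivity : (0:ℝ) ≤ _), ← h4]
        exact mul_le_mul_of_nonneg_left (norm_pow_le' _ (by omega)) (by positivity)
      refine h3.trans ?_
      have h5 : h ^ (k + 3) ≤ h ^ 3 := pow_le_pow_of_le_one h0 h1 (by omega)
      have h7 : ((Nat.factorial (k + 3) : ℝ))⁻¹ * (h ^ (k + 3) * ‖A‖ ^ (k + 3))
          ≤ ((Nat.factorial (k + 3) : ℝ))⁻¹ * (h ^ 3 * ‖A‖ ^ (k + 3)) := by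
        refine mul_le_mul_of_nonneg_left ?_ (by positivity)
        exact mul_le_mul_of_nonneg_right h5 (pow_nonneg (norm_nonneg A) _)
      calc ((Nat.factorial (k + 3) : ℝ))⁻¹ * (h * ‖A‖) ^ (k + 3)
          = ((Nat.factorial (k + 3) : ℝ))⁻¹ * (h ^ (k + 3) * ‖A‖ ^ (k + 3)) := by
            rw [mul_pow]
        _ ≤ ((Nat.factorial (k + 3) : ℝ))⁻¹ * (h ^ 3 * ‖A‖ ^ (k + 3)) := h7
        _ = ‖A‖ ^ (k + 3) / (Nat.factorial (k + 3)) * h ^ 3 := by ring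
    have hnormsum3 : Summable (fun k : ℕ => ‖((Nat.factorial (k + 3) : ℝ))⁻¹ • (h • A) ^ (k + 3)‖) :=
      (summable_nat_add_iff 3).mpr hnormsum
    have hsumR : Summable (fun k : ℕ => ‖A‖ ^ (k + 3) / (Nat.factorial (k + 3)) * h ^ 3) :=
      (((summable_nat_add_iff 3).mpr (Real.summable_pow_div_factorial ‖A‖))).mul_right _
    calc ‖∑' k : ℕ, ((Nat.factorial (k + 3) : ℝ))⁻¹ • (h • A) ^ (k + 3)‖
        ≤ ∑' k : ℕ, ‖((Nat.factorial (k + 3) : ℝ))⁻¹ • (h • A) ^ (k + 3)‖ :=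
          norm_tsum_le_tsum_norm hnormsum3
      _ ≤ ∑' k : ℕ, ‖A‖ ^ (k + 3) / (Nat.factorial (k + 3)) * h ^ 3 :=
          Summable.tsum_le_tsum hterm hnormsum3 hsumR
      _ = (∑' k : ℕ, ‖A‖ ^ (k + 3) / (Nat.factorial (k + 3))) * h ^ 3 := tsum_mul_right
      _ ≤ S * h ^ 3 := by
          gcongr
          have hfull := Summable.sum_add_tsum_nat_add (f := fun k : ℕ => ‖A‖ ^ k / (Nat.factorial k)) 3
            (Real.summable_pow_div_factorial ‖A‖)
          have hpos : 0 ≤ ∑ i ∈ Finset.range 3, ‖A‖ ^ i / (Nat.factorial i : ℝ) := by positivity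
          rw [hS, ← hfull]
          linarith
  refine le_trans (Matrix.linfty_opNorm_mulVec _ _) ?_
  calc ‖NormedSpace.exp (h • A)
        - ((1 : Matrix n n ℝ) + h • A + (h ^ 2 / 2) • A ^ 2)‖ * ‖y‖
      ≤ (S * h ^ 3) * ‖y‖ := mul_le_mul_of_nonneg_right key (norm_nonneg y)
    _ ≤ (S + 1) * h ^ 3 * ‖y‖ := by nlinarith [norm_nonneg y, pow_nonneg h0 3]

lemma flow_bound {d : ℕ} (N : (Fin d → ℝ) → (Fin d → ℝ) → (Fin d → ℝ))
    (hN : ContDiff ℝ 2 (fun p : (Fin d → ℝ) × (Fin d → ℝ) => N p.1 p.2))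
    (x v : Fin d → ℝ) (T : ℝ) (hT : 0 < T) (g : ℝ → Fin d → ℝ)
    (hg0 : g 0 = v)
    (hg : ∀ t ∈ Set.Ico (0:ℝ) T, HasDerivWithinAt g (N x (g t)) (Set.Ico 0 T) t) :
    ∃ C > (0:ℝ), ∃ δ > (0:ℝ), δ ≤ T ∧ ∀ t : ℝ, 0 ≤ t → t ≤ δ →
      ‖g t - v‖ ≤ C * t ∧ ‖g t - v - t • N x v‖ ≤ C * t ^ 2 := by
  have hf : ContDiff ℝ 1 (fun w => N x w) := by
    have heq : (fun w => N x w)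
        = (fun p : (Fin d → ℝ) × (Fin d → ℝ) => N p.1 p.2) ∘ (fun w => (x, w)) := rfl
    rw [heq]
    exact (hN.of_le one_le_two).comp (contDiff_const.prodMk contDiff_id)
  obtain ⟨K, s, hs, hK⟩ := hf.contDiffAt.exists_lipschitzOnWith (x := v)
  obtain ⟨ε, hε, hball⟩ := Metric.mem_nhds_iff.mp hs
  have hT2 : (0:ℝ) < T/2 := by linarith
  have hIccsub : Set.Icc (0:ℝ) (T/2) ⊆ Set.Ico 0 T :=
    fun r hr => ⟨hr.1, lt_of_le_of_lt hr.2 (by linarith)⟩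
  have hderiv : ∀ r ∈ Set.Icc (0:ℝ) (T/2),
      HasDerivWithinAt g (N x (g r)) (Set.Icc 0 (T/2)) r :=
    fun r hr => (hg r (hIccsub hr)).mono hIccsub
  have hcont : ContinuousOn g (Set.Icc 0 (T/2)) :=
    fun r hr => (hderiv r hr).continuousWithinAt
  obtain ⟨M₀, hM₀⟩ := (isCompact_Icc (a := (0:ℝ)) (b := T/2)).exists_bound_of_continuousOn
    (hf.continuous.comp_continuousOn hcont)
  set M : ℝ := max M₀ 0 + 1 with hM
  have hMpos : 0 < M := by
    have : (0:ℝ) ≤ max M₀ 0 := le_max_right _ _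
    linarith
  have hMb : ∀ r ∈ Set.Icc (0:ℝ) (T/2), ‖N x (g r)‖ ≤ M := by
    intro r hr
    have := hM₀ r hr
    have h2 : M₀ ≤ M := by
      have := le_max_left M₀ (0:ℝ); linarith
    exact le_trans this h2
  have hlin : ∀ r ∈ Set.Icc (0:ℝ) (T/2), ‖g r - v‖ ≤ M * r := by
    intro r hr
    have := norm_image_sub_le_of_norm_deriv_le_segment' hderiv
      (fun u hu => hMb u (Set.Ico_subset_Icc_self hu)) r hr
    simpa [hg0] using this
  set δ : ℝ := min (T/2) (ε / (2*M)) with hδdef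
  have hδpos : 0 < δ := lt_min hT2 (by positivity)
  have hδT : δ ≤ T := le_trans (min_le_left _ _) (by linarith)
  have hδIcc : ∀ t : ℝ, 0 ≤ t → t ≤ δ → t ∈ Set.Icc (0:ℝ) (T/2) :=
    fun t h0 h1 => ⟨h0, le_trans h1 (min_le_left _ _)⟩
  have hgs : ∀ r : ℝ, 0 ≤ r → r ≤ δ → g r ∈ s := by
    intro r h0 h1
    apply hball
    rw [Metric.mem_ball, dist_eq_norm]
    have h2 : ‖g r - v‖ ≤ M * r := hlin r (hδIcc r h0 h1)
    have h3 : M * r ≤ M * (ε / (2*M)) := by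
      have : r ≤ ε / (2*M) := le_trans h1 (min_le_right _ _)
      exact mul_le_mul_of_nonneg_left this hMpos.le
    have h4 : M * (ε / (2*M)) = ε / 2 := by field_simp
    calc ‖g r - v‖ ≤ M * r := h2
      _ ≤ ε / 2 := by rw [← h4]; exact h3
      _ < ε := by linarith
  have hvs : v ∈ s := hball (Metric.mem_ball_self hε)
  refine ⟨M + K * M + 1, by positivity, δ, hδpos, hδT, fun t ht0 htδ => ?_⟩
  have htIcc := hδIcc t ht0 htδ
  constructor
  · calc ‖g t - v‖ ≤ M * t := hlin t htIcc
      _ ≤ (M + K * M + 1) * t := by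
        refine mul_le_mul_of_nonneg_right ?_ ht0
        have : (0:ℝ) ≤ (K:ℝ) * M := by positivity
        linarith
  · -- second order
    have hIccsub2 : Set.Icc (0:ℝ) t ⊆ Set.Icc 0 (T/2) :=
      fun r hr => ⟨hr.1, le_trans hr.2 htIcc.2⟩
    have hG : ∀ r ∈ Set.Icc (0:ℝ) t,
        HasDerivWithinAt (fun u => g u - u • N x v) (N x (g r) - N x v) (Set.Icc 0 t) r := by
      intro r hr
      have h1 : HasDerivWithinAt g (N x (g r)) (Set.Icc 0 t) r :=
        (hderiv r (hIccsub2 hr)).mono hIccsub2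
      have h2 : HasDerivWithinAt (fun u : ℝ => u • N x v) (N x v) (Set.Icc 0 t) r := by
        simpa using ((hasDerivAt_id r).smul_const (N x v)).hasDerivWithinAt
      exact h1.sub h2
    have hGb : ∀ r ∈ Set.Ico (0:ℝ) t, ‖N x (g r) - N x v‖ ≤ K * (M * t) := by
      intro r hr
      have hr' : r ≤ δ := le_trans hr.2.le htδ
      have h1 : dist (N x (g r)) (N x v) ≤ K * dist (g r) v :=
        hK.dist_le_mul (g r) (hgs r hr.1 hr') v hvs
      rw [dist_eq_norm, dist_eq_norm] at h1
      refine h1.trans ?_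
      have h2 : ‖g r - v‖ ≤ M * r := hlin r (hδIcc r hr.1 hr')
      have h3 : M * r ≤ M * t := mul_le_mul_of_nonneg_left hr.2.le hMpos.le
      have : ‖g r - v‖ ≤ M * t := le_trans h2 h3
      exact mul_le_mul_of_nonneg_left this K.2
    have := norm_image_sub_le_of_norm_deriv_le_segment' hG hGb t
      (Set.right_mem_Icc.mpr ht0)
    have h4 : (fun u => g u - u • N x v) t - (fun u => g u - u • N x v) 0 = g t - v - t • N x v := by
      simp only [hg0, zero_smul, sub_zero]
      abel
    rw [h4] at this
    calc ‖g t - v - t • N x v‖ ≤ K * (M * t) * (t - 0) := this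
      _ = (K * M) * t ^ 2 := by ring
      _ ≤ (M + K * M + 1) * t ^ 2 := by
        refine mul_le_mul_of_nonneg_right ?_ (by positivity)
        have : (0:ℝ) ≤ K * M := by positivity
        linarith
/-- The block drift matrix `Ã = [[0, I],[A_x, A_v]]`. -/
noncomputable def Atilde {d : ℕ} (Ax Av : Matrix (Fin d) (Fin d) ℝ) :
    Matrix (Fin d ⊕ Fin d) (Fin d ⊕ Fin d) ℝ :=
  Matrix.fromBlocks 0 1 Ax Av

/-- `μ̃_h(y) = exp(Ã h)(y − b̃) + b̃`. -/
noncomputable def muTilde {d : ℕ} (Ax Av : Matrix (Fin d) (Fin d) ℝ)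
    (b : Fin d → ℝ) (h : ℝ) (y : Fin d ⊕ Fin d → ℝ) : Fin d ⊕ Fin d → ℝ :=
  NormedSpace.exp (h • Atilde Ax Av) *ᵥ (y - Sum.elim b 0) + Sum.elim b 0

set_option maxHeartbeats 2000000 in
theorem stmt12 {d : ℕ} (hd : 1 ≤ d) (Ax Av : Matrix (Fin d) (Fin d) ℝ)
    (N : (Fin d → ℝ) → (Fin d → ℝ) → (Fin d → ℝ))
    (hN : ContDiff ℝ 2 (fun p : (Fin d → ℝ) × (Fin d → ℝ) => N p.1 p.2))
    (x v b : Fin d → ℝ) (T : ℝ) (hT : 0 < T)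
    (φ : ℝ → (Fin d → ℝ) → (Fin d → ℝ))
    (hφ0 : ∀ w, φ 0 w = w)
    (hφ : ∀ w, ∀ t ∈ Set.Ico (0:ℝ) T,
      HasDerivWithinAt (fun s => φ s w) (N x (φ t w)) (Set.Ico 0 T) t) :
    ∃ C > (0:ℝ), ∃ h₀ > (0:ℝ), h₀ ≤ 2 * T ∧ ∀ h : ℝ, 0 < h → h < h₀ →
      ‖(fun i => muTilde Ax Av b h (Sum.elim x (φ (h / 2) v)) (Sum.inl i)) -
          (x + h • v +
            (h ^ 2 / 2) • (Ax *ᵥ (x - b) + Av *ᵥ v + N x v))‖ ≤ C * h ^ 3 ∧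
      ‖(fun i => muTilde Ax Av b h (Sum.elim x (φ (h / 2) v)) (Sum.inr i)) -
          (v + h • ((Ax *ᵥ (x - b) + Av *ᵥ v + N x v) -
            (1 / 2 : ℝ) • N x v))‖ ≤ C * h ^ 2 := by
  obtain ⟨C₁, hC₁, hexp⟩ := exp_taylor_mulVec (Atilde Ax Av)
  obtain ⟨C₂, hC₂, δ, hδpos, hδT, hflow⟩ :=
    flow_bound N hN x v T hT (fun t => φ t v) (hφ0 v) (hφ v)
  obtain ⟨KAx, hKAx0, hKAx⟩ := exists_mulVec_bound Ax
  obtain ⟨KAv, hKAv0, hKAv⟩ := exists_mulVec_bound Av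
  set W : ℝ := ‖v‖ + C₂ * δ with hW
  set U : ℝ := ‖x - b‖ + W with hU
  set Q : ℝ := KAx * ‖x - b‖ + KAv * W with hQ
  set Z : ℝ := KAx * W + KAv * Q with hZ
  have hWnn : 0 ≤ W := add_nonneg (norm_nonneg v) (mul_nonneg hC₂.le hδpos.le)
  have hUnn : 0 ≤ U := add_nonneg (norm_nonneg _) hWnn
  have hQnn : 0 ≤ Q :=
    add_nonneg (mul_nonneg hKAx0 (norm_nonneg _)) (mul_nonneg hKAv0 hWnn)
  have hZnn : 0 ≤ Z := add_nonneg (mul_nonneg hKAx0 hWnn) (mul_nonneg hKAv0 hQnn)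
  have hCpos : (0:ℝ) < C₂ + KAv * C₂ + C₁ * U + Z + 1 := by
    have h1 : 0 ≤ KAv * C₂ := mul_nonneg hKAv0 hC₂.le
    have h2 : 0 ≤ C₁ * U := mul_nonneg hC₁.le hUnn
    linarith
  refine ⟨C₂ + KAv * C₂ + C₁ * U + Z + 1, hCpos,
    min (2 * δ) (min 1 (2 * T)),
    lt_min (by linarith) (lt_min one_pos (by linarith)),
    le_trans (min_le_right _ _) (min_le_right _ _), fun h hh0 hhh => ?_⟩
  have hle1 : h ≤ 1 :=
    le_of_lt (lt_of_lt_of_le hhh (le_trans (min_le_right _ _) (min_le_left _ _)))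
  have hhδ : h / 2 ≤ δ := by
    have := lt_of_lt_of_le hhh (min_le_left _ _); linarith
  have hh2 : (0:ℝ) ≤ h / 2 := by linarith
  obtain ⟨hw1, hw2⟩ := hflow (h / 2) hh2 hhδ
  set w : Fin d → ℝ := φ (h / 2) v with hwdef
  have hwv : ‖w - v‖ ≤ C₂ * (h / 2) := hw1
  have hwv2 : ‖w - v - (h / 2) • N x v‖ ≤ C₂ * (h / 2) ^ 2 := hw2
  have hwn : ‖w‖ ≤ W := by
    have h1 : ‖w‖ ≤ ‖v‖ + ‖w - v‖ := by
      have := norm_add_le v (w - v); simpa using this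
    refine h1.trans ?_
    rw [hW]
    have h2 : C₂ * (h / 2) ≤ C₂ * δ := mul_le_mul_of_nonneg_left hhδ hC₂.le
    linarith [hwv]
  set u : Fin d ⊕ Fin d → ℝ := Sum.elim x w - Sum.elim b 0 with hu'
  have hu : u = Sum.elim (x - b) w := by
    funext i; cases i <;> simp [hu']
  have hun : ‖u‖ ≤ U := by
    rw [hu, hU]
    exact le_trans (norm_sum_elim_le _ _) (by linarith [hwn])
  set R : Matrix (Fin d ⊕ Fin d) (Fin d ⊕ Fin d) ℝ :=
    NormedSpace.exp (h • Atilde Ax Av)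
      - ((1 : Matrix (Fin d ⊕ Fin d) (Fin d ⊕ Fin d) ℝ)
        + h • Atilde Ax Av + (h ^ 2 / 2) • (Atilde Ax Av) ^ 2) with hR
  have hRu : ‖R *ᵥ u‖ ≤ C₁ * h ^ 3 * ‖u‖ := hexp h hh0.le hle1 u
  have hRu' : ‖R *ᵥ u‖ ≤ C₁ * U * h ^ 3 := by
    refine le_trans hRu ?_
    have h3 : 0 ≤ C₁ * h ^ 3 := mul_nonneg hC₁.le (by positivity)
    calc C₁ * h ^ 3 * ‖u‖ ≤ C₁ * h ^ 3 * U := mul_le_mul_of_nonneg_left hun h3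
      _ = C₁ * U * h ^ 3 := by ring
  have h1 : Atilde Ax Av *ᵥ u = Sum.elim w (Ax *ᵥ (x - b) + Av *ᵥ w) := by
    rw [hu, Atilde, Matrix.fromBlocks_mulVec]
    simp
  have h2 : Atilde Ax Av *ᵥ Sum.elim w (Ax *ᵥ (x - b) + Av *ᵥ w)
      = Sum.elim (Ax *ᵥ (x - b) + Av *ᵥ w)
        (Ax *ᵥ w + Av *ᵥ (Ax *ᵥ (x - b) + Av *ᵥ w)) := by
    rw [Atilde, Matrix.fromBlocks_mulVec]
    simp
  have hmu : muTilde Ax Av b h (Sum.elim x w)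
      = Sum.elim (x - b) w + h • Sum.elim w (Ax *ᵥ (x - b) + Av *ᵥ w)
        + (h ^ 2 / 2) • Sum.elim (Ax *ᵥ (x - b) + Av *ᵥ w)
            (Ax *ᵥ w + Av *ᵥ (Ax *ᵥ (x - b) + Av *ᵥ w))
        + R *ᵥ u + Sum.elim b 0 := by
    unfold muTilde
    rw [← hu']
    have hE : NormedSpace.exp (h • Atilde Ax Av)
        = ((1 : Matrix (Fin d ⊕ Fin d) (Fin d ⊕ Fin d) ℝ)
          + h • Atilde Ax Av + (h ^ 2 / 2) • (Atilde Ax Av) ^ 2) + R := by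
      rw [hR]; abel
    rw [hE, Matrix.add_mulVec, Matrix.add_mulVec, Matrix.add_mulVec, Matrix.one_mulVec,
      Matrix.smul_mulVec, Matrix.smul_mulVec, pow_two (Atilde Ax Av),
      ← Matrix.mulVec_mulVec, h1, h2, hu]
  -- component identities
  have hSkey : (fun i => muTilde Ax Av b h (Sum.elim x w) (Sum.inl i))
      - (x + h • v + (h ^ 2 / 2) • (Ax *ᵥ (x - b) + Av *ᵥ v + N x v))
      = h • (w - v - (h / 2) • N x v) + (h ^ 2 / 2) • (Av *ᵥ w - Av *ᵥ v)
        + (fun i => (R *ᵥ u) (Sum.inl i)) := by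
    funext i
    simp only [hmu, Pi.add_apply, Pi.sub_apply, Pi.smul_apply, Pi.zero_apply, Sum.elim_inl,
      smul_eq_mul]
    ring
  have hRkey : (fun i => muTilde Ax Av b h (Sum.elim x w) (Sum.inr i))
      - (v + h • ((Ax *ᵥ (x - b) + Av *ᵥ v + N x v) - (1 / 2 : ℝ) • N x v))
      = (w - v - (h / 2) • N x v) + h • (Av *ᵥ w - Av *ᵥ v)
        + (h ^ 2 / 2) • (Ax *ᵥ w + Av *ᵥ (Ax *ᵥ (x - b) + Av *ᵥ w))
        + (fun i => (R *ᵥ u) (Sum.inr i)) := by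
    funext i
    simp only [hmu, Pi.add_apply, Pi.sub_apply, Pi.smul_apply, Pi.zero_apply, Sum.elim_inr,
      smul_eq_mul]
    ring
  have h3nn : (0:ℝ) ≤ h ^ 3 := by positivity
  have h2nn : (0:ℝ) ≤ h ^ 2 := by positivity
  have hb1 : ‖h • (w - v - (h / 2) • N x v)‖ ≤ C₂ * h ^ 3 := by
    rw [norm_smul, Real.norm_eq_abs, abs_of_nonneg hh0.le]
    calc h * ‖w - v - (h / 2) • N x v‖ ≤ h * (C₂ * (h / 2) ^ 2) :=
          mul_le_mul_of_nonneg_left hwv2 hh0.le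
      _ = C₂ * h ^ 3 / 4 := by ring
      _ ≤ C₂ * h ^ 3 := by nlinarith [mul_nonneg hC₂.le h3nn]
  have hb2 : ‖(h ^ 2 / 2) • (Av *ᵥ w - Av *ᵥ v)‖ ≤ KAv * C₂ * h ^ 3 := by
    rw [← Matrix.mulVec_sub, norm_smul, Real.norm_eq_abs,
      abs_of_nonneg (by positivity : (0:ℝ) ≤ h ^ 2 / 2)]
    calc h ^ 2 / 2 * ‖Av *ᵥ (w - v)‖ ≤ h ^ 2 / 2 * (KAv * ‖w - v‖) :=
          mul_le_mul_of_nonneg_left (hKAv _) (by positivity)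
      _ ≤ h ^ 2 / 2 * (KAv * (C₂ * (h / 2))) := by
          refine mul_le_mul_of_nonneg_left ?_ (by positivity)
          exact mul_le_mul_of_nonneg_left hwv hKAv0
      _ = KAv * C₂ * h ^ 3 / 4 := by ring
      _ ≤ KAv * C₂ * h ^ 3 := by
          nlinarith [mul_nonneg (mul_nonneg hKAv0 hC₂.le) h3nn]
  have hb3 : ‖(fun i => (R *ᵥ u) (Sum.inl i))‖ ≤ C₁ * U * h ^ 3 :=
    le_trans (norm_inl_le _) hRu'
  have hb3r : ‖(fun i => (R *ᵥ u) (Sum.inr i))‖ ≤ C₁ * U * h ^ 2 := by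
    refine le_trans (norm_inr_le _) (le_trans hRu' ?_)
    have : h ^ 3 ≤ h ^ 2 := by nlinarith
    exact mul_le_mul_of_nonneg_left this (mul_nonneg hC₁.le hUnn)
  have hqn : ‖Ax *ᵥ (x - b) + Av *ᵥ w‖ ≤ Q := by
    rw [hQ]
    refine le_trans (norm_add_le _ _) (add_le_add (hKAx _) ?_)
    exact le_trans (hKAv _) (mul_le_mul_of_nonneg_left hwn hKAv0)
  have hzn : ‖Ax *ᵥ w + Av *ᵥ (Ax *ᵥ (x - b) + Av *ᵥ w)‖ ≤ Z := by
    rw [hZ]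
    refine le_trans (norm_add_le _ _) (add_le_add ?_ ?_)
    · exact le_trans (hKAx _) (mul_le_mul_of_nonneg_left hwn hKAx0)
    · exact le_trans (hKAv _) (mul_le_mul_of_nonneg_left hqn hKAv0)
  constructor
  · rw [hSkey]
    calc ‖h • (w - v - (h / 2) • N x v) + (h ^ 2 / 2) • (Av *ᵥ w - Av *ᵥ v)
          + (fun i => (R *ᵥ u) (Sum.inl i))‖
        ≤ ‖h • (w - v - (h / 2) • N x v)‖ + ‖(h ^ 2 / 2) • (Av *ᵥ w - Av *ᵥ v)‖
          + ‖(fun i => (R *ᵥ u) (Sum.inl i))‖ := norm_add₃_le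
      _ ≤ C₂ * h ^ 3 + KAv * C₂ * h ^ 3 + C₁ * U * h ^ 3 :=
          add_le_add (add_le_add hb1 hb2) hb3
      _ ≤ (C₂ + KAv * C₂ + C₁ * U + Z + 1) * h ^ 3 := by
          nlinarith [mul_nonneg hZnn h3nn, h3nn]
  · rw [hRkey]
    have hc1 : ‖w - v - (h / 2) • N x v‖ ≤ C₂ * h ^ 2 := by
      refine le_trans hwv2 ?_
      nlinarith [mul_nonneg hC₂.le h2nn]
    have hc2 : ‖h • (Av *ᵥ w - Av *ᵥ v)‖ ≤ KAv * C₂ * h ^ 2 := by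
      rw [← Matrix.mulVec_sub, norm_smul, Real.norm_eq_abs, abs_of_nonneg hh0.le]
      calc h * ‖Av *ᵥ (w - v)‖ ≤ h * (KAv * ‖w - v‖) :=
            mul_le_mul_of_nonneg_left (hKAv _) hh0.le
        _ ≤ h * (KAv * (C₂ * (h / 2))) := by
            refine mul_le_mul_of_nonneg_left ?_ hh0.le
            exact mul_le_mul_of_nonneg_left hwv hKAv0
        _ = KAv * C₂ * h ^ 2 / 2 := by ring
        _ ≤ KAv * C₂ * h ^ 2 := by
            nlinarith [mul_nonneg (mul_nonneg hKAv0 hC₂.le) h2nn]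
    have hc3 : ‖(h ^ 2 / 2) • (Ax *ᵥ w + Av *ᵥ (Ax *ᵥ (x - b) + Av *ᵥ w))‖
        ≤ Z * h ^ 2 := by
      rw [norm_smul, Real.norm_eq_abs, abs_of_nonneg (by positivity : (0:ℝ) ≤ h ^ 2 / 2)]
      calc h ^ 2 / 2 * ‖Ax *ᵥ w + Av *ᵥ (Ax *ᵥ (x - b) + Av *ᵥ w)‖
          ≤ h ^ 2 / 2 * Z := mul_le_mul_of_nonneg_left hzn (by positivity)
        _ ≤ Z * h ^ 2 := by nlinarith [mul_nonneg hZnn h2nn]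
    calc ‖(w - v - (h / 2) • N x v) + h • (Av *ᵥ w - Av *ᵥ v)
          + (h ^ 2 / 2) • (Ax *ᵥ w + Av *ᵥ (Ax *ᵥ (x - b) + Av *ᵥ w))
          + (fun i => (R *ᵥ u) (Sum.inr i))‖
        ≤ ‖(w - v - (h / 2) • N x v) + h • (Av *ᵥ w - Av *ᵥ v)
          + (h ^ 2 / 2) • (Ax *ᵥ w + Av *ᵥ (Ax *ᵥ (x - b) + Av *ᵥ w))‖
          + ‖(fun i => (R *ᵥ u) (Sum.inr i))‖ := norm_add_le _ _
      _ ≤ (‖w - v - (h / 2) • N x v‖ + ‖h • (Av *ᵥ w - Av *ᵥ v)‖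
          + ‖(h ^ 2 / 2) • (Ax *ᵥ w + Av *ᵥ (Ax *ᵥ (x - b) + Av *ᵥ w))‖)
          + ‖(fun i => (R *ᵥ u) (Sum.inr i))‖ := by
            gcongr
            exact norm_add₃_le
      _ ≤ (C₂ * h ^ 2 + KAv * C₂ * h ^ 2 + Z * h ^ 2) + C₁ * U * h ^ 2 :=
          add_le_add (add_le_add (add_le_add hc1 hc2) hc3) hb3r
      _ ≤ (C₂ + KAv * C₂ + C₁ * U + Z + 1) * h ^ 2 := by
          nlinarith [h2nn]
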